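/- For any b ≥ 1, 0 < ε < 1, and any graph G with d vertices and resilience r, the ℓ¹ ε-covering number of the set T_b(G) of probability tensors Markov to G satisfies log N(T_b(G), ε) ≤ d·b^r · log(2·d^{r+1}·b / ε). -/

import Mathlib

open SimpleGraph

/-- One step of a disintegration: `D` consists of exactly one vertex from each
connected component of the subgraph of `G` induced on `R`. -/
def DisStep {V : Type*} (G : SimpleGraph V) (R D : Set V) : Prop :=
  ∃ hsub : D ⊆ R,
    (∀ (v w : V) (hv : v ∈ D) (hw : w ∈ D), v ≠ w →
      (G.induce R).connectedComponentMk ⟨v, hsub hv⟩ ≠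
        (G.induce R).connectedComponentMk ⟨w, hsub hw⟩) ∧
    (∀ c : (G.induce R).ConnectedComponent, ∃ (v : V) (hv : v ∈ D),
      (G.induce R).connectedComponentMk ⟨v, hsub hv⟩ = c)

/-- `(D 0, D 1, ..., D (r-1))` is a disintegration of `G`: the steps partition the
vertex set and each step removes exactly one vertex per connected component of what remains. -/
def IsDisintegration {V : Type*} (G : SimpleGraph V) (D : ℕ → Set V) (r : ℕ) : Prop :=
  (∀ i, r ≤ i → D i = ∅) ∧ (⋃ i, D i) = Set.univ ∧
    ∀ i, DisStep G (Set.univ \ ⋃ j < i, D j) (D i)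

/-- The graph resilience: minimal length of a disintegration. -/
noncomputable def resilience {V : Type*} (G : SimpleGraph V) : ℕ :=
  sInf {r | ∃ D, IsDisintegration G D r}

/-- `S` separates `A` from `B` in `G`: every walk from `A` to `B` meets `S`. -/
def Separates {V : Type*} (G : SimpleGraph V) (A B S : Set V) : Prop :=
  ∀ a ∈ A, ∀ b ∈ B, ∀ w : G.Walk a b, ∃ v ∈ w.support, v ∈ S

/-- Marginal of a tensor `T` on the variables in `U`, evaluated at the assignment `σ`. -/
def marginal {V : Type*} [Fintype V] [DecidableEq V] {b : ℕ}
    (T : (V → Fin b) → ℝ) (U : Finset V) (σ : V → Fin b) : ℝ :=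
  ∑ x : V → Fin b, if ∀ u ∈ U, x u = σ u then T x else 0

/-- The (global) Markov property of a probability tensor with respect to `G`:
graph separation implies conditional independence. -/
def IsMarkov {V : Type*} [Fintype V] [DecidableEq V] {b : ℕ} (G : SimpleGraph V)
    (T : (V → Fin b) → ℝ) : Prop :=
  ∀ A B S : Finset V, Disjoint A B → Disjoint A S → Disjoint B S →
    Separates G ↑A ↑B ↑S →
    ∀ σ : V → Fin b,
      marginal T (A ∪ B ∪ S) σ * marginal T S σ =
        marginal T (A ∪ S) σ * marginal T (B ∪ S) σ

/-- The set `𝒯_b(G)` of probability tensors with `b` states per variable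
that are Markov with respect to `G`. -/
def probTensors {V : Type*} [Fintype V] [DecidableEq V] (b : ℕ) (G : SimpleGraph V) :
    Set ((V → Fin b) → ℝ) :=
  {T | (∀ x, 0 ≤ T x) ∧ (∑ x, T x = 1) ∧ IsMarkov G T}

/-- ℓ¹ distance between tensors. -/
def l1Dist {α : Type*} [Fintype α] (T T' : α → ℝ) : ℝ := ∑ x, |T x - T' x|

/-- The ε-covering number of `A` (with centers in `A`) under distance `dist`. -/
noncomputable def coverNum {α : Type*} (A : Set α) (dist : α → α → ℝ) (ε : ℝ) : ℕ∞ :=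
  sInf {n : ℕ∞ | ∃ C : Finset α, ↑C ⊆ A ∧ (C.card : ℕ∞) = n ∧
    ∀ a ∈ A, ∃ c ∈ C, dist a c ≤ ε}


open Function

section Marg
variable {V : Type*} [Fintype V] [DecidableEq V] {b : ℕ} {T : (V → Fin b) → ℝ}
  {U U' : Finset V} {σ σ' : V → Fin b} {w : V}

lemma marginal_nonneg (hT : ∀ x, 0 ≤ T x) : 0 ≤ marginal T U σ := by
  refine Finset.sum_nonneg fun x _ => ?_
  split <;> simp [hT]

lemma marginal_congr (h : ∀ u ∈ U, σ u = σ' u) : marginal T U σ = marginal T U σ' := by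
  refine Finset.sum_congr rfl fun x _ => ?_
  have : (∀ u ∈ U, x u = σ u) ↔ (∀ u ∈ U, x u = σ' u) :=
    ⟨fun H u hu => (H u hu).trans (h u hu), fun H u hu => (H u hu).trans (h u hu).symm⟩
  simp only [this]

lemma marginal_update_notmem (hw : w ∉ U) (t : Fin b) :
    marginal T U (Function.update σ w t) = marginal T U σ :=
  marginal_congr fun u hu => Function.update_of_ne (ne_of_mem_of_not_mem hu hw) _ _

lemma marginal_empty : marginal T ∅ σ = ∑ x, T x := by
  simp [marginal]

lemma marginal_univ : marginal T Finset.univ σ = T σ := by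
  rw [marginal]
  rw [Finset.sum_eq_single σ]
  · simp
  · intro x _ hx
    rw [if_neg]
    intro h
    exact hx (funext fun u => h u (Finset.mem_univ u))
  · simp

lemma marginal_mono (hT : ∀ x, 0 ≤ T x) (h : U ⊆ U') :
    marginal T U' σ ≤ marginal T U σ := by
  refine Finset.sum_le_sum fun x _ => ?_
  by_cases hx : ∀ u ∈ U', x u = σ u
  · rw [if_pos hx, if_pos fun u hu => hx u (h hu)]
  · rw [if_neg hx]
    split <;> simp [hT]

lemma self_le_marginal (hT : ∀ x, 0 ≤ T x) : T σ ≤ marginal T U σ := by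
  rw [← marginal_univ (T := T) (σ := σ)]
  exact marginal_mono hT (Finset.subset_univ U)

lemma marginal_insert (hw : w ∉ U) :
    marginal T U σ = ∑ t, marginal T (insert w U) (Function.update σ w t) := by
  unfold marginal
  rw [Finset.sum_comm]
  refine Finset.sum_congr rfl fun x _ => ?_
  have key : ∀ t : Fin b, (∀ u ∈ insert w U, x u = Function.update σ w t u) ↔
      (x w = t ∧ ∀ u ∈ U, x u = σ u) := by
    intro t
    constructor
    · intro H
      refine ⟨by simpa using H w (Finset.mem_insert_self w U), fun u hu => ?_⟩
      have := H u (Finset.mem_insert_of_mem hu)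
      rwa [Function.update_of_ne (ne_of_mem_of_not_mem hu hw)] at this
    · rintro ⟨h1, h2⟩ u hu
      rcases Finset.mem_insert.mp hu with rfl | hu
      · simpa using h1
      · rw [Function.update_of_ne (ne_of_mem_of_not_mem hu hw)]; exact h2 u hu
  simp only [key]
  by_cases hx : ∀ u ∈ U, x u = σ u
  · have h2 : ∀ t : Fin b, (x w = t ∧ ∀ u ∈ U, x u = σ u) ↔ (x w = t) :=
      fun t => and_iff_left hx
    simp only [h2, if_pos hx]
    simp
  · have h2 : ∀ t : Fin b, ((x w = t ∧ ∀ u ∈ U, x u = σ u) ↔ False) :=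
      fun t => iff_false_intro (fun h => hx h.2)
    simp only [h2, if_false, Finset.sum_const_zero, if_neg hx]

end Marg

section Key
variable {V : Type*} [Fintype V] [DecidableEq V] {b : ℕ}

lemma sum_pin (v : V) (x₀ : V → Fin b) (f : (V → Fin b) → ℝ) (p : V → Prop)
    [DecidablePred p] (hv : p v) :
    ∑ x : V → Fin b, (if ∀ w, p w → x w = x₀ w then ∑ t, f (Function.update x v t) else 0)
      = ∑ x : V → Fin b, (if ∀ w, p w ∧ w ≠ v → x w = x₀ w then f x else 0) := by
  classical
  have step1 : ∑ x : V → Fin b, (if ∀ w, p w → x w = x₀ w then ∑ t, f (Function.update x v t) else 0)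
      = ∑ t : Fin b, ∑ x : V → Fin b, (if ∀ w, p w → x w = x₀ w then f (Function.update x v t) else 0) := by
    rw [Finset.sum_comm]
    refine Finset.sum_congr rfl fun x _ => ?_
    split
    · rfl
    · simp
  rw [step1]
  have step2 : ∀ t : Fin b,
      ∑ x : V → Fin b, (if ∀ w, p w → x w = x₀ w then f (Function.update x v t) else 0)
      = ∑ y : V → Fin b, (if (∀ w, p w ∧ w ≠ v → y w = x₀ w) ∧ y v = t then f y else 0) := by
    intro t
    rw [← Finset.sum_filter, ← Finset.sum_filter]
    refine Finset.sum_nbij' (fun x => Function.update x v t)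
      (fun y => Function.update y v (x₀ v)) ?_ ?_ ?_ ?_ ?_
    · intro x hx
      simp only [Finset.mem_filter, Finset.mem_univ, true_and] at hx ⊢
      refine ⟨fun w hw => ?_, by simp⟩
      rw [Function.update_of_ne hw.2]
      exact hx w hw.1
    · intro y hy
      simp only [Finset.mem_filter, Finset.mem_univ, true_and] at hy ⊢
      intro w hw
      by_cases hwv : w = v
      · subst hwv; simp
      · rw [Function.update_of_ne hwv]
        exact hy.1 w ⟨hw, hwv⟩
    · intro x hx
      simp only [Finset.mem_filter, Finset.mem_univ, true_and] at hx
      show Function.update (Function.update x v t) v (x₀ v) = x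
      rw [Function.update_idem]
      have : x₀ v = x v := (hx v hv).symm
      rw [this, Function.update_eq_self]
    · intro y hy
      simp only [Finset.mem_filter, Finset.mem_univ, true_and] at hy
      show Function.update (Function.update y v (x₀ v)) v t = y
      rw [Function.update_idem, ← hy.2, Function.update_eq_self]
    · intro x _
      rfl
  simp only [step2]
  rw [Finset.sum_comm]
  refine Finset.sum_congr rfl fun y _ => ?_
  by_cases hy : ∀ w, p w ∧ w ≠ v → y w = x₀ w
  · have h2 : ∀ t : Fin b, ((∀ w, p w ∧ w ≠ v → y w = x₀ w) ∧ y v = t) ↔ (y v = t) :=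
      fun t => and_iff_right hy
    simp only [h2, if_pos hy]
    simp
  · have h2 : ∀ t : Fin b, (((∀ w, p w ∧ w ≠ v → y w = x₀ w) ∧ y v = t) ↔ False) :=
      fun t => iff_false_intro (fun h => hy h.1)
    simp only [h2, if_false, Finset.sum_const_zero, if_neg hy]


lemma key (ord : V → ℕ) (hord : Function.Injective ord) (x₀ : V → Fin b)
    (f : V → (V → Fin b) → ℝ) (B : V → ℝ)
    (hf0 : ∀ v x, 0 ≤ f v x)
    (hdep : ∀ v w x t, ord v < ord w → f v (Function.update x w t) = f v x)
    (hsumf : ∀ v x, ∑ t, f v (Function.update x v t) ≤ B v) :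
    ∀ n : ℕ, (∑ x : V → Fin b, if ∀ w, n ≤ ord w → x w = x₀ w
        then (∏ v ∈ Finset.univ.filter (fun v => ord v < n), f v x) else 0)
      ≤ ∏ v ∈ Finset.univ.filter (fun v => ord v < n), B v := by
  classical
  have hB0 : ∀ v, 0 ≤ B v := fun v =>
    le_trans (Finset.sum_nonneg fun t _ => hf0 v _) (hsumf v x₀)
  intro n
  induction n with
  | zero =>
    have hF : Finset.univ.filter (fun v => ord v < 0) = ∅ := by
      apply Finset.filter_false_of_mem; intro v _; omega
    rw [hF]
    simp only [Finset.prod_empty]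
    have : ∀ x : V → Fin b, (∀ w, 0 ≤ ord w → x w = x₀ w) ↔ x = x₀ := by
      intro x
      constructor
      · intro h; exact funext fun w => h w (Nat.zero_le _)
      · intro h; subst h; intro w _; rfl
    simp only [this]
    rw [Finset.sum_ite_eq' Finset.univ x₀ (fun _ => (1:ℝ))]
    simp
  | succ n ih =>
    by_cases hocc : ∃ v, ord v = n
    · obtain ⟨v, hv⟩ := hocc
      have hvn : v ∉ Finset.univ.filter (fun w => ord w < n) := by simp [hv]
      have hF : Finset.univ.filter (fun w => ord w < n + 1)
          = insert v (Finset.univ.filter (fun w => ord w < n)) := by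
        ext w
        simp only [Finset.mem_filter, Finset.mem_univ, true_and, Finset.mem_insert]
        constructor
        · intro h
          rcases Nat.lt_succ_iff_lt_or_eq.mp h with h | h
          · exact Or.inr h
          · exact Or.inl (hord (h.trans hv.symm))
        · rintro (rfl | h)
          · omega
          · omega
      rw [hF]
      simp only [Finset.prod_insert hvn]
      have hpin : ∀ x : V → Fin b,
          (∀ w, n + 1 ≤ ord w → x w = x₀ w) ↔ (∀ w, (n ≤ ord w) ∧ w ≠ v → x w = x₀ w) := by
        intro x
        constructor
        · intro h w hw
          refine h w ?_
          rcases Nat.lt_or_ge (ord w) (n+1) with h1 | h1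
          · exfalso; have := hw.1; have : ord w = n := by omega
            exact hw.2 (hord (this.trans hv.symm))
          · exact h1
        · intro h w hw
          refine h w ⟨by omega, fun hwv => ?_⟩
          subst hwv; omega
      have step : ∑ x : V → Fin b, (if ∀ w, n + 1 ≤ ord w → x w = x₀ w
            then f v x * ∏ u ∈ Finset.univ.filter (fun w => ord w < n), f u x else 0)
          = ∑ x : V → Fin b, (if ∀ w, n ≤ ord w → x w = x₀ w
            then ∑ t, (f v (Function.update x v t)
              * ∏ u ∈ Finset.univ.filter (fun w => ord w < n), f u (Function.update x v t)) else 0) := by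
        rw [sum_pin v x₀ (fun y => f v y * ∏ u ∈ Finset.univ.filter (fun w => ord w < n), f u y)
          (fun w => n ≤ ord w) (le_of_eq hv.symm)]
        exact Finset.sum_congr rfl fun x _ => if_congr (hpin x) rfl rfl
      rw [step]
      have bound : ∀ x : V → Fin b,
          (∑ t, (f v (Function.update x v t)
            * ∏ u ∈ Finset.univ.filter (fun w => ord w < n), f u (Function.update x v t)))
          ≤ B v * ∏ u ∈ Finset.univ.filter (fun w => ord w < n), f u x := by
        intro x
        have hup : ∀ t, ∏ u ∈ Finset.univ.filter (fun w => ord w < n), f u (Function.update x v t)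
            = ∏ u ∈ Finset.univ.filter (fun w => ord w < n), f u x := by
          intro t
          refine Finset.prod_congr rfl fun u hu => ?_
          have : ord u < n := (Finset.mem_filter.mp hu).2
          exact hdep u v x t (by omega)
        simp only [hup]
        rw [← Finset.sum_mul]
        exact mul_le_mul_of_nonneg_right (hsumf v x) (Finset.prod_nonneg fun u _ => hf0 u x)
      calc ∑ x : V → Fin b, (if ∀ w, n ≤ ord w → x w = x₀ w
            then ∑ t, (f v (Function.update x v t)
              * ∏ u ∈ Finset.univ.filter (fun w => ord w < n), f u (Function.update x v t)) else 0)
          ≤ ∑ x : V → Fin b, (if ∀ w, n ≤ ord w → x w = x₀ w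
            then B v * ∏ u ∈ Finset.univ.filter (fun w => ord w < n), f u x else 0) := by
            refine Finset.sum_le_sum fun x _ => ?_
            split
            · exact bound x
            · exact le_rfl
        _ = B v * ∑ x : V → Fin b, (if ∀ w, n ≤ ord w → x w = x₀ w
            then ∏ u ∈ Finset.univ.filter (fun w => ord w < n), f u x else 0) := by
            rw [Finset.mul_sum]
            refine Finset.sum_congr rfl fun x _ => ?_
            split
            · rfl
            · rw [mul_zero]
        _ ≤ B v * ∏ u ∈ Finset.univ.filter (fun w => ord w < n), B u :=
            mul_le_mul_of_nonneg_left ih (hB0 v)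
    · have hF : Finset.univ.filter (fun w => ord w < n + 1)
          = Finset.univ.filter (fun w => ord w < n) := by
        ext w
        simp only [Finset.mem_filter, Finset.mem_univ, true_and]
        have : ord w ≠ n := fun h => hocc ⟨w, h⟩
        omega
      have hpin : ∀ x : V → Fin b,
          (∀ w, n + 1 ≤ ord w → x w = x₀ w) ↔ (∀ w, n ≤ ord w → x w = x₀ w) := by
        intro x
        constructor
        · intro h w hw
          have : ord w ≠ n := fun h' => hocc ⟨w, h'⟩
          exact h w (by omega)
        · intro h w hw; exact h w (by omega)
      rw [hF]
      calc _ = ∑ x : V → Fin b, (if ∀ w, n ≤ ord w → x w = x₀ w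
            then ∏ u ∈ Finset.univ.filter (fun w => ord w < n), f u x else 0) := by
            exact Finset.sum_congr rfl fun x _ => if_congr (hpin x) rfl rfl
        _ ≤ _ := ih

lemma key' (ord : V → ℕ) (hord : Function.Injective ord) (x₀ : V → Fin b)
    (f : V → (V → Fin b) → ℝ) (B : V → ℝ)
    (hf0 : ∀ v x, 0 ≤ f v x)
    (hdep : ∀ v w x t, ord v < ord w → f v (Function.update x w t) = f v x)
    (hsumf : ∀ v x, ∑ t, f v (Function.update x v t) ≤ B v)
    (n : ℕ) (hn : ∀ v, ord v < n) :
    ∑ x : V → Fin b, ∏ v, f v x ≤ ∏ v, B v := by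
  classical
  have hF : Finset.univ.filter (fun v => ord v < n) = Finset.univ := by
    apply Finset.filter_true_of_mem; intro v _; exact hn v
  have := key ord hord x₀ f B hf0 hdep hsumf n
  rw [hF] at this
  refine le_trans (le_of_eq ?_) this
  refine Finset.sum_congr rfl fun x _ => ?_
  rw [if_pos]
  intro w hw
  exact absurd hw (by have := hn w; omega)
end Key

section Greedy
variable {V : Type*} [Fintype V] [DecidableEq V]
variable (G : SimpleGraph V)

noncomputable def pickSet (R : Set V) : Set V :=
  Set.range (fun c : (G.induce R).ConnectedComponent =>
    ((Classical.choose c.exists_rep : R) : V))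

lemma pickSet_spec (R : Set V) (c : (G.induce R).ConnectedComponent) :
    (G.induce R).connectedComponentMk (Classical.choose c.exists_rep) = c :=
  Classical.choose_spec c.exists_rep

lemma pickSet_subset (R : Set V) : pickSet G R ⊆ R := by
  rintro x ⟨c, rfl⟩
  exact (Classical.choose c.exists_rep).2

lemma pickSet_disStep (R : Set V) : DisStep G R (pickSet G R) := by
  refine ⟨pickSet_subset G R, ?_, ?_⟩
  · rintro v w hv hw hne heq
    obtain ⟨c1, hc1⟩ := id hv
    obtain ⟨c2, hc2⟩ := id hw
    have e1 : (⟨v, pickSet_subset G R hv⟩ : R) = Classical.choose c1.exists_rep :=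
      Subtype.ext hc1.symm
    have e2 : (⟨w, pickSet_subset G R hw⟩ : R) = Classical.choose c2.exists_rep :=
      Subtype.ext hc2.symm
    rw [e1, pickSet_spec, e2, pickSet_spec] at heq
    subst heq
    exact hne (hc1.symm.trans hc2)
  · intro c
    refine ⟨(Classical.choose c.exists_rep : R), ⟨c, rfl⟩, ?_⟩
    have : (⟨((Classical.choose c.exists_rep : R) : V), _⟩ : R) = Classical.choose c.exists_rep :=
      Subtype.ext rfl
    rw [this, pickSet_spec]

noncomputable def RG : ℕ → Set V
  | 0 => Set.univ
  | (n+1) => RG n \ pickSet G (RG n)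

noncomputable def DG (n : ℕ) : Set V := pickSet G (RG G n)

lemma RG_succ (n : ℕ) : RG G (n+1) = RG G n \ DG G n := rfl

lemma RG_eq (n : ℕ) : RG G n = Set.univ \ ⋃ j < n, DG G j := by
  induction n with
  | zero =>
    ext x; simp [RG]
  | succ n ih =>
    rw [RG_succ, ih]
    ext x
    simp only [Set.mem_diff, Set.mem_univ, true_and, Set.mem_iUnion]
    constructor
    · rintro ⟨h1, h2⟩
      rintro ⟨j, hj, hx⟩
      rcases Nat.lt_succ_iff_lt_or_eq.mp hj with hj' | rfl
      · exact h1 ⟨j, hj', hx⟩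
      · exact h2 hx
    · intro h
      exact ⟨fun ⟨j, hj, hx⟩ => h ⟨j, hj.trans (Nat.lt_succ_self n), hx⟩,
        fun hx => h ⟨n, Nat.lt_succ_self n, hx⟩⟩

lemma RG_card (n : ℕ) : (RG G n).ncard ≤ Fintype.card V - n := by
  induction n with
  | zero =>
    simp [RG, Set.ncard_univ]
  | succ n ih =>
    rcases Set.eq_empty_or_nonempty (RG G n) with he | ⟨x, hx⟩
    · rw [RG_succ, he]
      simp
    · set c := (G.induce (RG G n)).connectedComponentMk ⟨x, hx⟩ with hc
      have hpick : ((Classical.choose c.exists_rep : RG G n) : V)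
            ∈ pickSet G (RG G n) := ⟨c, rfl⟩
      have hss : RG G (n+1) ⊂ RG G n := by
        rw [RG_succ]
        refine (Set.ssubset_iff_of_subset Set.diff_subset).mpr ?_
        exact ⟨_, (Classical.choose c.exists_rep).2, fun hcon => hcon.2 hpick⟩
      have := Set.ncard_lt_ncard hss (Set.toFinite _)
      omega

lemma RG_empty {n : ℕ} (hn : Fintype.card V ≤ n) : RG G n = ∅ := by
  induction n with
  | zero =>
    have h1 := RG_card G 0
    have : (RG G 0).ncard = 0 := by omega
    exact (Set.ncard_eq_zero (Set.toFinite _)).mp this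
  | succ n ih =>
    rcases Nat.lt_or_ge (Fintype.card V) (n+1) with h | h
    · have := ih (by omega)
      rw [RG_succ, this]
      simp
    · have h1 := RG_card G (n+1)
      have : (RG G (n+1)).ncard = 0 := by omega
      exact (Set.ncard_eq_zero (Set.toFinite _)).mp this

lemma greedy_isDis : IsDisintegration G (DG G) (Fintype.card V) := by
  refine ⟨fun i hi => ?_, ?_, fun i => ?_⟩
  · have : RG G i = ∅ := RG_empty G hi
    have h2 : DG G i ⊆ RG G i := pickSet_subset G (RG G i)
    rw [this] at h2
    exact Set.subset_empty_iff.mp h2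
  · classical
    ext x
    simp only [Set.mem_iUnion, Set.mem_univ, iff_true]
    have hx0 : x ∈ RG G 0 := Set.mem_univ x
    have hxe : x ∉ RG G (Fintype.card V) := by rw [RG_empty G le_rfl]; exact id
    have hex : ∃ n, x ∉ RG G n := ⟨_, hxe⟩
    have hkpos : Nat.find hex ≠ 0 := by
      intro h
      exact (h ▸ Nat.find_spec hex) hx0
    obtain ⟨m, hm⟩ : ∃ m, Nat.find hex = m + 1 := ⟨Nat.find hex - 1, by omega⟩
    have hm1 : x ∈ RG G m := by
      by_contra hc
      have h9 : Nat.find hex ≤ m := Nat.find_le hc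
      omega
    have hm2 : x ∉ RG G (m+1) := hm ▸ Nat.find_spec hex
    refine ⟨m, ?_⟩
    by_contra hc
    exact hm2 ⟨hm1, hc⟩
  · rw [← RG_eq]
    exact pickSet_disStep G (RG G i)

lemma exists_dis_of_resilience {r : ℕ} (hr : resilience G = r) :
    ∃ D, IsDisintegration G D r := by
  have hne : {r' | ∃ D, IsDisintegration G D r'}.Nonempty :=
    ⟨Fintype.card V, DG G, greedy_isDis G⟩
  have := Nat.sInf_mem hne
  rwa [show sInf {r' | ∃ D, IsDisintegration G D r'} = r from hr] at this

end Greedy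

section DisFacts
variable {V : Type*} [Fintype V] [DecidableEq V] {G : SimpleGraph V} {D : ℕ → Set V} {r : ℕ}

/-- remaining vertices at step i -/
def RSet (D : ℕ → Set V) (i : ℕ) : Set V := Set.univ \ ⋃ j < i, D j

lemma D_subset_RSet (hD : IsDisintegration G D r) (i : ℕ) : D i ⊆ RSet D i :=
  (hD.2.2 i).choose

/-- the step at which v is removed -/
noncomputable def stepOf (D : ℕ → Set V) (v : V) : ℕ := sInf {i | v ∈ D i}

lemma mem_stepOf (hD : IsDisintegration G D r) (v : V) : v ∈ D (stepOf D v) := by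
  have : v ∈ ⋃ i, D i := hD.2.1 ▸ Set.mem_univ v
  obtain ⟨i, hi⟩ := Set.mem_iUnion.mp this
  exact Nat.sInf_mem (⟨i, hi⟩ : {i | v ∈ D i}.Nonempty)

lemma stepOf_unique (hD : IsDisintegration G D r) {v : V} {i : ℕ} (hv : v ∈ D i) :
    stepOf D v = i := by
  have h1 : stepOf D v ≤ i := Nat.sInf_le hv
  rcases Nat.lt_or_ge (stepOf D v) i with h | h
  · exfalso
    have h2 := D_subset_RSet hD i hv
    exact h2.2 (Set.mem_iUnion.mpr ⟨stepOf D v, Set.mem_iUnion.mpr ⟨h, mem_stepOf hD v⟩⟩)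
  · omega

lemma mem_RSet_iff (hD : IsDisintegration G D r) {v : V} {i : ℕ} :
    v ∈ RSet D i ↔ i ≤ stepOf D v := by
  constructor
  · intro hv
    by_contra hc
    exact hv.2 (Set.mem_iUnion.mpr ⟨stepOf D v,
      Set.mem_iUnion.mpr ⟨by omega, mem_stepOf hD v⟩⟩)
  · intro hi
    refine ⟨Set.mem_univ v, ?_⟩
    intro hc
    obtain ⟨j, hj⟩ := Set.mem_iUnion.mp hc
    obtain ⟨hji, hvj⟩ := Set.mem_iUnion.mp hj
    have := stepOf_unique hD hvj
    omega

lemma stepOf_lt_r (hD : IsDisintegration G D r) (hV : Nonempty V → True) (v : V) :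
    stepOf D v < r := by
  by_contra hc
  have : D (stepOf D v) = ∅ := hD.1 _ (by omega)
  exact absurd (mem_stepOf hD v) (this ▸ id)

lemma RSet_antitone {i j : ℕ} (hij : i ≤ j) : RSet D j ⊆ RSet D i := by
  intro x hx
  refine ⟨Set.mem_univ x, fun hc => hx.2 ?_⟩
  obtain ⟨k, hk⟩ := Set.mem_iUnion.mp hc
  obtain ⟨hki, hxk⟩ := Set.mem_iUnion.mp hk
  exact Set.mem_iUnion.mpr ⟨k, Set.mem_iUnion.mpr ⟨by omega, hxk⟩⟩

/-- same connected component of the remaining graph at step i -/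
def SameComp (G : SimpleGraph V) (D : ℕ → Set V) (i : ℕ) (u v : V) : Prop :=
  ∃ (hu : u ∈ RSet D i) (hv : v ∈ RSet D i),
    (G.induce (RSet D i)).Reachable ⟨u, hu⟩ ⟨v, hv⟩

/-- ancestors of v: vertices removed earlier from v's then-current component -/
noncomputable def ancSet (G : SimpleGraph V) (D : ℕ → Set V) (v : V) : Finset V :=
  (Set.toFinite {u | ∃ j < stepOf D v, u ∈ D j ∧ SameComp G D j u v}).toFinset

lemma mem_ancSet_iff {u v : V} :
    u ∈ ancSet G D v ↔ ∃ j < stepOf D v, u ∈ D j ∧ SameComp G D j u v :=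
  Set.Finite.mem_toFinset _

lemma anc_step_lt (hD : IsDisintegration G D r) {u v : V} (hu : u ∈ ancSet G D v) :
    stepOf D u < stepOf D v := by
  obtain ⟨j, hj, hu, _⟩ := mem_ancSet_iff.mp hu
  rwa [stepOf_unique hD hu]

lemma comp_unique (hD : IsDisintegration G D r) {j : ℕ} {u u' : V}
    (hu : u ∈ D j) (hu' : u' ∈ D j)
    (h : ∃ (h1 : u ∈ RSet D j) (h2 : u' ∈ RSet D j),
      (G.induce (RSet D j)).Reachable ⟨u, h1⟩ ⟨u', h2⟩) : u = u' := by
  obtain ⟨hsub, hone, _⟩ := hD.2.2 j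
  by_contra hne
  obtain ⟨h1, h2, hreach⟩ := h
  exact hone u u' hu hu' hne (ConnectedComponent.eq.mpr hreach)

lemma anc_card (hD : IsDisintegration G D r) (v : V) :
    (ancSet G D v).card ≤ stepOf D v := by
  have := Finset.card_le_card_of_injOn (stepOf D)
    (s := ancSet G D v) (t := Finset.range (stepOf D v)) ?_ ?_
  · simpa using this
  · intro u hu
    simp only [Finset.mem_coe, Finset.mem_range]
    exact anc_step_lt hD hu
  · intro u hu u' hu' heq
    obtain ⟨j, hj, huj, hcu⟩ := mem_ancSet_iff.mp hu
    obtain ⟨j', hj', huj', hcu'⟩ := mem_ancSet_iff.mp hu'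
    have e1 : stepOf D u = j := stepOf_unique hD huj
    have e2 : stepOf D u' = j' := stepOf_unique hD huj'
    have : j = j' := by rw [← e1, ← e2, heq]
    subst this
    obtain ⟨h1, h2, hr1⟩ := hcu
    obtain ⟨h1', h2', hr2⟩ := hcu'
    exact comp_unique hD huj huj' ⟨h1, h1', hr1.trans hr2.symm⟩

lemma walk_cross {S : Set V} :
    ∀ {a u : V} (w : G.Walk a u), a ∈ S → u ∉ S →
      ∃ y z, G.Adj y z ∧ y ∈ S ∧ z ∉ S ∧ z ∈ w.support := by
  intro a u w
  induction w with
  | nil => intro ha hu; exact absurd ha hu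
  | @cons a c u h p ih =>
    intro ha hu
    by_cases hc : c ∈ S
    · obtain ⟨y, z, h1, h2, h3, h4⟩ := ih hc hu
      exact ⟨y, z, h1, h2, h3, by simp [Walk.support_cons, h4]⟩
    · exact ⟨a, c, h, ha, hc, by simp [Walk.support_cons]⟩

lemma sep_anc (hD : IsDisintegration G D r) {v u : V}
    (hsu : stepOf D u ≤ stepOf D v) (hne : u ≠ v) (hu : u ∉ ancSet G D v)
    (w : G.Walk v u) : ∃ z ∈ w.support, z ∈ ancSet G D v := by
  set i := stepOf D v with hidef
  have hvR : v ∈ RSet D i := (mem_RSet_iff hD).mpr le_rfl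
  set K : Set V := {x | ∃ hx : x ∈ RSet D i,
    (G.induce (RSet D i)).Reachable ⟨x, hx⟩ ⟨v, hvR⟩} with hKdef
  have hvK : v ∈ K := ⟨hvR, Reachable.refl _⟩
  have huK : u ∉ K := by
    rintro ⟨huR, hreach⟩
    have hstep : stepOf D u = i := le_antisymm hsu ((mem_RSet_iff hD).mp huR)
    have huD : u ∈ D i := hstep ▸ mem_stepOf hD u
    have hvD : v ∈ D i := mem_stepOf hD v
    exact hne (comp_unique hD huD hvD ⟨huR, hvR, hreach⟩)
  obtain ⟨y, z, hadj, hyK, hzK, hzsupp⟩ := walk_cross w hvK huK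
  refine ⟨z, hzsupp, ?_⟩
  obtain ⟨hyR, hyreach⟩ := hyK
  have hzR : z ∉ RSet D i := by
    intro hzR
    apply hzK
    have hadj2 : (G.induce (RSet D i)).Adj ⟨z, hzR⟩ ⟨y, hyR⟩ := by
      simpa using hadj.symm
    exact ⟨hzR, hadj2.reachable.trans hyreach⟩
  have hj : stepOf D z < i := by
    have h9 : ¬ i ≤ stepOf D z := fun hle => hzR ((mem_RSet_iff hD).mpr hle)
    omega
  set j := stepOf D z with hjdef
  have hzRj : z ∈ RSet D j := (mem_RSet_iff hD).mpr le_rfl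
  have hsub : RSet D i ⊆ RSet D j := RSet_antitone (le_of_lt hj)
  have hmap : (G.induce (RSet D j)).Reachable ⟨y, hsub hyR⟩ ⟨v, hsub hvR⟩ :=
    hyreach.map (⟨fun x => ⟨x.1, hsub x.2⟩, fun {a b} hab => by simpa using hab⟩ :
      G.induce (RSet D i) →g G.induce (RSet D j))
  have hadj' : (G.induce (RSet D j)).Adj ⟨z, hzRj⟩ ⟨y, hsub hyR⟩ := by
    simpa using hadj.symm
  exact mem_ancSet_iff.mpr ⟨j, hj, mem_stepOf hD z,
    ⟨hzRj, hsub hvR, hadj'.reachable.trans hmap⟩⟩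

end DisFacts

section Chain
variable {V : Type*} [Fintype V] [DecidableEq V] {b : ℕ} {G : SimpleGraph V}
  {D : ℕ → Set V} {r d : ℕ}

/-- elimination order -/
noncomputable def ordOf (D : ℕ → Set V) (e : V ≃ Fin d) (v : V) : ℕ :=
  (e v : ℕ) + stepOf D v * d

lemma ordOf_inj (e : V ≃ Fin d) : Function.Injective (ordOf D e) := by
  intro v w h
  have hv : (e v : ℕ) < d := (e v).2
  have hw : (e w : ℕ) < d := (e w).2
  have hd : 0 < d := by omega
  have h1 : (ordOf D e v) % d = (e v : ℕ) := by
    rw [ordOf, Nat.add_mul_mod_self_right, Nat.mod_eq_of_lt hv]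
  have h2 : (ordOf D e w) % d = (e w : ℕ) := by
    rw [ordOf, Nat.add_mul_mod_self_right, Nat.mod_eq_of_lt hw]
  have : (e v : ℕ) = (e w : ℕ) := by rw [← h1, ← h2, h]
  exact e.injective (Fin.ext this)

lemma ordOf_lt_of_step_lt (e : V ≃ Fin d) {u v : V} (h : stepOf D u < stepOf D v) :
    ordOf D e u < ordOf D e v := by
  have hu : (e u : ℕ) < d := (e u).2
  have hv : (0:ℕ) ≤ (e v : ℕ) := Nat.zero_le _
  calc ordOf D e u < d + stepOf D u * d := by rw [ordOf]; omega
    _ = (stepOf D u + 1) * d := by ring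
    _ ≤ stepOf D v * d := Nat.mul_le_mul_right d h
    _ ≤ ordOf D e v := by rw [ordOf]; omega

lemma step_le_of_ord_lt (e : V ≃ Fin d) {u v : V} (h : ordOf D e u < ordOf D e v) :
    stepOf D u ≤ stepOf D v := by
  by_contra hc
  exact absurd (ordOf_lt_of_step_lt e (by omega : stepOf D v < stepOf D u)) (by omega)

lemma chain (hD : IsDisintegration G D r) (e : V ≃ Fin d) (T : (V → Fin b) → ℝ)
    (hT1 : ∑ x, T x = 1) (hM : IsMarkov G T) (n : ℕ) (x : V → Fin b) :
    marginal T (Finset.univ.filter (fun v => ordOf D e v < n)) x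
      * ∏ v ∈ Finset.univ.filter (fun v => ordOf D e v < n), marginal T (ancSet G D v) x
    = ∏ v ∈ Finset.univ.filter (fun v => ordOf D e v < n),
        marginal T (insert v (ancSet G D v)) x := by
  classical
  induction n with
  | zero =>
    have hF : Finset.univ.filter (fun v => ordOf D e v < 0) = ∅ := by
      apply Finset.filter_false_of_mem; intro v _; omega
    rw [hF, marginal_empty, hT1]
    simp
  | succ n ih =>
    by_cases hocc : ∃ v, ordOf D e v = n
    · obtain ⟨v, hv⟩ := hocc
      have hvn : v ∉ Finset.univ.filter (fun w => ordOf D e w < n) := by simp [hv]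
      have hF : Finset.univ.filter (fun w => ordOf D e w < n + 1)
          = insert v (Finset.univ.filter (fun w => ordOf D e w < n)) := by
        ext w
        simp only [Finset.mem_filter, Finset.mem_univ, true_and, Finset.mem_insert]
        constructor
        · intro h
          rcases Nat.lt_succ_iff_lt_or_eq.mp h with h | h
          · exact Or.inr h
          · exact Or.inl (ordOf_inj e (h.trans hv.symm))
        · rintro (rfl | h) <;> omega
      set F := Finset.univ.filter (fun w => ordOf D e w < n) with hFdef
      set S := ancSet G D v with hSdef
      have hSsub : S ⊆ F := by
        intro u hu
        simp only [hFdef, Finset.mem_filter, Finset.mem_univ, true_and]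
        have := ordOf_lt_of_step_lt e (anc_step_lt hD hu)
        omega
      have hvS : v ∉ S := fun hc => absurd (anc_step_lt hD hc) (lt_irrefl _)
      have hvF : v ∉ F := hvn
      have hmark := hM {v} (F \ S) S
        (by simp only [Finset.disjoint_left, Finset.mem_singleton]
            rintro a rfl
            intro hc
            exact hvF (Finset.mem_sdiff.mp hc).1)
        (by simp only [Finset.disjoint_left, Finset.mem_singleton]
            rintro a rfl; exact hvS)
        Finset.sdiff_disjoint
        ?_ x
      · have hU1 : {v} ∪ (F \ S) ∪ S = insert v F := by
          rw [Finset.union_assoc, Finset.sdiff_union_of_subset hSsub, ← Finset.insert_eq]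
        have hU2 : ({v} : Finset V) ∪ S = insert v S := (Finset.insert_eq v S).symm
        have hU3 : (F \ S) ∪ S = F := Finset.sdiff_union_of_subset hSsub
        rw [hU1, hU2, hU3] at hmark
        rw [hF, Finset.prod_insert hvn, Finset.prod_insert hvn]
        calc marginal T (insert v F) x * (marginal T S x * ∏ u ∈ F, marginal T (ancSet G D u) x)
            = (marginal T (insert v F) x * marginal T S x) * ∏ u ∈ F, marginal T (ancSet G D u) x := by ring
          _ = (marginal T (insert v S) x * marginal T F x) * ∏ u ∈ F, marginal T (ancSet G D u) x := by rw [hmark]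
          _ = marginal T (insert v S) x * (marginal T F x * ∏ u ∈ F, marginal T (ancSet G D u) x) := by ring
          _ = marginal T (insert v S) x * ∏ u ∈ F, marginal T (insert u (ancSet G D u)) x := by rw [ih]
      · -- Separates
        intro a ha u hu w
        have hav : a = v := by simpa using ha
        subst hav
        simp only [Finset.coe_sdiff, Set.mem_diff, Finset.mem_coe, Finset.mem_sdiff] at hu
        have huF : u ∈ F := by
          rcases hu with ⟨h1, _⟩
          exact_mod_cast h1
        have huS : u ∉ S := by
          rcases hu with ⟨_, h2⟩
          simpa using h2
        have hordu : ordOf D e u < n := by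
          have := Finset.mem_filter.mp huF
          exact this.2
        have hne : u ≠ a := by
          intro h
          subst h
          omega
        have hstep : stepOf D u ≤ stepOf D a := step_le_of_ord_lt e (by omega)
        obtain ⟨z, hz1, hz2⟩ := sep_anc hD hstep hne huS w
        exact ⟨z, hz1, by simpa using hz2⟩
    · have hF : Finset.univ.filter (fun w => ordOf D e w < n + 1)
          = Finset.univ.filter (fun w => ordOf D e w < n) := by
        ext w
        simp only [Finset.mem_filter, Finset.mem_univ, true_and]
        have : ordOf D e w ≠ n := fun h => hocc ⟨w, h⟩
        omega
      rw [hF]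
      exact ih

end Chain

-- ===== Part 4 : conditional factors =====
section Cond
variable {V : Type*} [Fintype V] [DecidableEq V] {b : ℕ} {G : SimpleGraph V}
  {D : ℕ → Set V} {r d : ℕ}

noncomputable def clSet (G : SimpleGraph V) (D : ℕ → Set V) (v : V) : Finset V :=
  insert v (ancSet G D v)

noncomputable def condq (G : SimpleGraph V) (D : ℕ → Set V) (T : (V → Fin b) → ℝ)
    (v : V) (x : V → Fin b) : ℝ :=
  if marginal T (ancSet G D v) x = 0 then 0
  else marginal T (clSet G D v) x / marginal T (ancSet G D v) x

variable {T : (V → Fin b) → ℝ}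

lemma cq_nonneg (hT0 : ∀ x, 0 ≤ T x) (v : V) (x : V → Fin b) : 0 ≤ condq G D T v x := by
  rw [condq]
  split
  · exact le_rfl
  · exact div_nonneg (marginal_nonneg hT0) (marginal_nonneg hT0)

lemma cq_le_one (hT0 : ∀ x, 0 ≤ T x) (v : V) (x : V → Fin b) : condq G D T v x ≤ 1 := by
  rw [condq]
  split
  · exact zero_le_one
  · rename_i h
    have h1 : marginal T (clSet G D v) x ≤ marginal T (ancSet G D v) x :=
      marginal_mono hT0 (Finset.subset_insert v _)
    have h0 : 0 ≤ marginal T (ancSet G D v) x := marginal_nonneg hT0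
    exact div_le_one_of_le₀ h1 h0

lemma mem_clSet_ord_le (hD : IsDisintegration G D r) (e : V ≃ Fin d) {u v : V}
    (hu : u ∈ clSet G D v) : ordOf D e u ≤ ordOf D e v := by
  rcases Finset.mem_insert.mp hu with rfl | hu
  · exact le_rfl
  · exact le_of_lt (ordOf_lt_of_step_lt e (anc_step_lt hD hu))

lemma cq_update (hD : IsDisintegration G D r) (e : V ≃ Fin d) {v w : V}
    (hvw : ordOf D e v < ordOf D e w) (x : V → Fin b) (t : Fin b) :
    condq G D T v (Function.update x w t) = condq G D T v x := by
  have hw : w ∉ clSet G D v := fun hc => absurd (mem_clSet_ord_le hD e hc) (by omega)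
  have hw2 : w ∉ ancSet G D v := fun hc => hw (Finset.mem_insert_of_mem hc)
  rw [condq, condq, marginal_update_notmem hw2, marginal_update_notmem hw]

lemma cq_congr {v : V} {x y : V → Fin b} (h : ∀ u ∈ clSet G D v, x u = y u) :
    condq G D T v x = condq G D T v y := by
  have h2 : ∀ u ∈ ancSet G D v, x u = y u := fun u hu =>
    h u (Finset.mem_insert_of_mem hu)
  rw [condq, condq, marginal_congr h2, marginal_congr h]

lemma cq_sum_le_one (hD : IsDisintegration G D r) (hT0 : ∀ x, 0 ≤ T x) (v : V) (x : V → Fin b) :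
    ∑ t, condq G D T v (Function.update x v t) ≤ 1 := by
  have hvanc : v ∉ ancSet G D v := fun hc => absurd (anc_step_lt hD hc) (lt_irrefl _)
  by_cases h : marginal T (ancSet G D v) x = 0
  · have : ∀ t : Fin b, condq G D T v (Function.update x v t) = 0 := by
      intro t
      rw [condq, marginal_update_notmem hvanc, if_pos h]
    simp [this]
  · have : ∀ t : Fin b, condq G D T v (Function.update x v t)
        = marginal T (clSet G D v) (Function.update x v t) / marginal T (ancSet G D v) x := by
      intro t
      rw [condq, marginal_update_notmem hvanc, if_neg h]
    rw [Finset.sum_congr rfl (fun t _ => this t), ← Finset.sum_div]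
    simp only [clSet]
    rw [← marginal_insert hvanc, div_self h]

lemma prod_cq (hD : IsDisintegration G D r) (e : V ≃ Fin d)
    (hT0 : ∀ x, 0 ≤ T x) (hT1 : ∑ x, T x = 1) (hM : IsMarkov G T) (x : V → Fin b) :
    T x = ∏ v, condq G D T v x := by
  have hord : ∀ v : V, ordOf D e v < r * d := by
    intro v
    have h1 : (e v : ℕ) < d := (e v).2
    have h2 : stepOf D v < r := stepOf_lt_r hD (fun _ => trivial) v
    calc ordOf D e v < d + stepOf D v * d := by rw [ordOf]; omega
      _ = (stepOf D v + 1) * d := by ring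
      _ ≤ r * d := Nat.mul_le_mul_right d h2
  have hF : Finset.univ.filter (fun v => ordOf D e v < r * d) = Finset.univ := by
    apply Finset.filter_true_of_mem
    intro v _
    exact hord v
  have hchain := chain hD e T hT1 hM (r * d) x
  rw [hF, marginal_univ] at hchain
  by_cases hz : ∃ v, marginal T (ancSet G D v) x = 0
  · obtain ⟨v, hv⟩ := hz
    have hT : T x = 0 := le_antisymm (hv ▸ self_le_marginal hT0) (hT0 x)
    rw [hT]
    symm
    apply Finset.prod_eq_zero (Finset.mem_univ v)
    rw [condq, if_pos hv]
  · push_neg at hz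
    have hcq : ∀ v : V, condq G D T v x
        = marginal T (clSet G D v) x / marginal T (ancSet G D v) x := by
      intro v
      rw [condq, if_neg (hz v)]
    rw [Finset.prod_congr rfl (fun v _ => hcq v), Finset.prod_div_distrib]
    simp only [clSet]
    have hprod : ∏ v : V, marginal T (ancSet G D v) x ≠ 0 :=
      Finset.prod_ne_zero_iff.mpr (fun v _ => hz v)
    rw [← hchain, mul_div_assoc, div_self hprod, mul_one]

end Cond

section L1
variable {V : Type*} [Fintype V] [DecidableEq V] {b : ℕ}

lemma l1_prod (ord : V → ℕ) (hord : Function.Injective ord)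
    (x₀ : V → Fin b) (N : ℕ) (hN : ∀ v, ord v < N)
    (Q Qh : V → (V → Fin b) → ℝ) (δ C : ℝ) (hδ : 0 ≤ δ) (hC : 1 ≤ C)
    (hQ0 : ∀ v x, 0 ≤ Q v x) (hQh0 : ∀ v x, 0 ≤ Qh v x)
    (hdepQ : ∀ v w x t, ord v < ord w → Q v (Function.update x w t) = Q v x)
    (hdepQh : ∀ v w x t, ord v < ord w → Qh v (Function.update x w t) = Qh v x)
    (hsumQ : ∀ v x, ∑ t, Q v (Function.update x v t) ≤ 1)
    (hsumQh : ∀ v x, ∑ t, Qh v (Function.update x v t) ≤ C)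
    (hdiff : ∀ v x, |Q v x - Qh v x| ≤ δ) :
    ∑ x : V → Fin b, |∏ v, Q v x - ∏ v, Qh v x|
      ≤ (Fintype.card V) * ((b * δ) * C ^ (Fintype.card V - 1)) := by
  classical
  set F : ℕ → Finset V := fun n => Finset.univ.filter (fun v => ord v < n) with hFdef
  set P : ℕ → (V → Fin b) → ℝ :=
    fun n x => (∏ v ∈ F n, Qh v x) * (∏ v ∈ Finset.univ \ F n, Q v x) with hPdef
  have hF0 : F 0 = ∅ := by
    apply Finset.filter_false_of_mem; intro v _; omega
  have hFN : F N = Finset.univ := by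
    apply Finset.filter_true_of_mem; intro v _; exact hN v
  have hP0 : ∀ x, P 0 x = ∏ v, Q v x := by
    intro x; rw [hPdef]; simp [hF0]
  have hPN : ∀ x, P N x = ∏ v, Qh v x := by
    intro x; rw [hPdef]; simp [hFN]
  set W : ℝ := (b * δ) * C ^ (Fintype.card V - 1) with hWdef
  have hW0 : 0 ≤ W := by
    apply mul_nonneg (by positivity)
    positivity
  have herr : ∀ n, ∑ x : V → Fin b, |P n x - P (n+1) x|
      ≤ if ∃ v, ord v = n then W else 0 := by
    intro n
    by_cases hocc : ∃ v, ord v = n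
    · rw [if_pos hocc]
      obtain ⟨v, hv⟩ := hocc
      have hvn : v ∉ F n := by simp [hFdef, hv]
      have hvn1 : v ∈ F (n+1) := by simp [hFdef, hv]
      have hFs : F (n+1) = insert v (F n) := by
        ext w
        simp only [hFdef, Finset.mem_filter, Finset.mem_univ, true_and, Finset.mem_insert]
        constructor
        · intro h
          rcases Nat.lt_succ_iff_lt_or_eq.mp h with h | h
          · exact Or.inr h
          · exact Or.inl (hord (h.trans hv.symm))
        · rintro (rfl | h) <;> omega
      have hsplit : Finset.univ \ F n = insert v (Finset.univ \ F (n+1)) := by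
        ext w
        simp only [Finset.mem_sdiff, Finset.mem_univ, true_and, Finset.mem_insert,
          hFdef, Finset.mem_filter]
        constructor
        · intro h
          by_cases hwv : w = v
          · exact Or.inl hwv
          · right
            intro hc
            rcases Nat.lt_succ_iff_lt_or_eq.mp hc with hc | hc
            · exact h hc
            · exact hwv (hord (hc.trans hv.symm))
        · rintro (rfl | h)
          · omega
          · intro hc; exact h (by omega)
      have hvnot : v ∉ Finset.univ \ F (n+1) := by
        simp [hvn1]
      -- pointwise difference formula
      have hpt : ∀ x, |P n x - P (n+1) x|
          = (∏ w ∈ F n, Qh w x) * (|Q v x - Qh v x| * ∏ w ∈ Finset.univ \ F (n+1), Q w x) := by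
        intro x
        have e1 : P n x = (∏ w ∈ F n, Qh w x)
            * (Q v x * ∏ w ∈ Finset.univ \ F (n+1), Q w x) := by
          rw [hPdef]
          simp only
          rw [hsplit, Finset.prod_insert hvnot]
        have e2 : P (n+1) x = (∏ w ∈ F n, Qh w x)
            * (Qh v x * ∏ w ∈ Finset.univ \ F (n+1), Q w x) := by
          rw [hPdef]
          simp only
          rw [hFs, Finset.prod_insert hvn]
          ring
        rw [e1, e2, ← mul_sub, ← sub_mul, abs_mul, abs_mul]
        rw [abs_of_nonneg (Finset.prod_nonneg fun w _ => hQh0 w x),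
          abs_of_nonneg (Finset.prod_nonneg fun w _ => hQ0 w x)]
      -- express as a single product and apply key'
      set f : V → (V → Fin b) → ℝ := fun w =>
        if w ∈ F n then Qh w else if w = v then (fun x => |Q v x - Qh v x|) else Q w with hfdef
      have hprod : ∀ x, ∏ w, f w x
          = (∏ w ∈ F n, Qh w x) * (|Q v x - Qh v x| * ∏ w ∈ Finset.univ \ F (n+1), Q w x) := by
        intro x
        rw [← Finset.prod_sdiff (Finset.subset_univ (F n))]
        have p1 : ∏ w ∈ F n, f w x = ∏ w ∈ F n, Qh w x :=
          Finset.prod_congr rfl fun w hw => by simp [hfdef, hw]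
        have p2 : ∏ w ∈ Finset.univ \ F n, f w x
            = |Q v x - Qh v x| * ∏ w ∈ Finset.univ \ F (n+1), Q w x := by
          rw [hsplit, Finset.prod_insert hvnot]
          have hfv : f v x = |Q v x - Qh v x| := by simp [hfdef, hvn]
          rw [hfv]
          congr 1
          refine Finset.prod_congr rfl fun w hw => ?_
          have h1 : w ∉ F n := by
            intro hc
            have := Finset.mem_sdiff.mp hw
            exact this.2 (by rw [hFs]; exact Finset.mem_insert_of_mem hc)
          have h2 : w ≠ v := by
            intro hc
            subst hc
            exact (Finset.mem_sdiff.mp hw).2 hvn1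
          simp [hfdef, h1, h2]
        rw [p1, p2]
        ring
      set Bf : V → ℝ := fun w => if w ∈ F n then C else if w = v then b * δ else 1 with hBdef
      have hkey := key' ord hord x₀ f Bf ?_ ?_ ?_ N hN
      · have hBprod : ∏ w, Bf w ≤ W := by
          rw [← Finset.prod_sdiff (Finset.subset_univ (F n))]
          have p1 : ∏ w ∈ F n, Bf w = C ^ (F n).card := by
            rw [Finset.prod_congr rfl (fun w hw => by simp [hBdef, hw] : ∀ w ∈ F n, Bf w = C)]
            exact Finset.prod_const C
          have p2 : ∏ w ∈ Finset.univ \ F n, Bf w = b * δ := by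
            rw [hsplit, Finset.prod_insert hvnot]
            have hfv : Bf v = b * δ := by simp [hBdef, hvn]
            rw [hfv]
            have : ∏ w ∈ Finset.univ \ F (n+1), Bf w = 1 := by
              apply Finset.prod_eq_one
              intro w hw
              have h1 : w ∉ F n := by
                intro hc
                exact (Finset.mem_sdiff.mp hw).2 (by rw [hFs]; exact Finset.mem_insert_of_mem hc)
              have h2 : w ≠ v := by
                intro hc; subst hc; exact (Finset.mem_sdiff.mp hw).2 hvn1
              simp [hBdef, h1, h2]
            rw [this, mul_one]
          rw [p1, p2, hWdef]
          have hcard : (F n).card ≤ Fintype.card V - 1 := by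
            have h1 : (F n).card < Fintype.card V := by
              rw [← Finset.card_univ]
              exact Finset.card_lt_card (Finset.ssubset_univ_iff.mpr (fun hc => hvn (hc ▸ Finset.mem_univ v)))
            omega
          have := pow_le_pow_right₀ hC hcard
          apply mul_le_mul_of_nonneg_left this (by positivity)
        calc ∑ x : V → Fin b, |P n x - P (n+1) x|
            = ∑ x : V → Fin b, ∏ w, f w x := by
              refine Finset.sum_congr rfl fun x _ => ?_
              rw [hpt x, hprod x]
          _ ≤ ∏ w, Bf w := hkey
          _ ≤ W := hBprod
      · intro w x
        simp only [hfdef]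
        split
        · exact hQh0 w x
        · split
          · positivity
          · exact hQ0 w x
      · intro w w' x t hww'
        simp only [hfdef]
        split
        · exact hdepQh w w' x t hww'
        · split
          · rename_i h1 h2
            rw [h2] at hww'
            simp only [hdepQ v w' x t hww', hdepQh v w' x t hww']
          · exact hdepQ w w' x t hww'
      · intro w x
        simp only [hfdef, hBdef]
        split
        · exact hsumQh w x
        · split
          · refine le_trans (Finset.sum_le_sum fun t _ => hdiff v _) ?_
            rw [Finset.sum_const, Finset.card_univ, Fintype.card_fin, nsmul_eq_mul]
          · exact hsumQ w x
    · rw [if_neg hocc]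
      have hFs : F (n+1) = F n := by
        ext w
        simp only [hFdef, Finset.mem_filter, Finset.mem_univ, true_and]
        have : ord w ≠ n := fun h => hocc ⟨w, h⟩
        omega
      have : ∀ x, P n x = P (n+1) x := by
        intro x; rw [hPdef]; simp only [hFs]
      refine le_of_eq ?_
      refine Finset.sum_eq_zero fun x _ => ?_
      rw [this x]
      simp
  -- assemble
  calc ∑ x : V → Fin b, |∏ v, Q v x - ∏ v, Qh v x|
      = ∑ x : V → Fin b, |P 0 x - P N x| := by
        refine Finset.sum_congr rfl fun x _ => ?_
        rw [hP0 x, hPN x]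
    _ ≤ ∑ x : V → Fin b, ∑ n ∈ Finset.range N, |P n x - P (n+1) x| := by
        refine Finset.sum_le_sum fun x _ => ?_
        rw [← Finset.sum_range_sub' (fun n => P n x) N]
        exact Finset.abs_sum_le_sum_abs _ _
    _ = ∑ n ∈ Finset.range N, ∑ x : V → Fin b, |P n x - P (n+1) x| := Finset.sum_comm
    _ ≤ ∑ n ∈ Finset.range N, (if ∃ v, ord v = n then W else 0) :=
        Finset.sum_le_sum fun n _ => herr n
    _ = ∑ n ∈ (Finset.range N).filter (fun n => ∃ v, ord v = n), W := by
        rw [Finset.sum_filter]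
    _ = ((Finset.range N).filter (fun n => ∃ v, ord v = n)).card • W := by
        rw [Finset.sum_const]
    _ ≤ (Fintype.card V) * W := by
        rw [nsmul_eq_mul]
        apply mul_le_mul_of_nonneg_right _ hW0
        have hsub : (Finset.range N).filter (fun n => ∃ v, ord v = n)
            ⊆ Finset.image ord Finset.univ := by
          intro n hn
          obtain ⟨v, hv⟩ := (Finset.mem_filter.mp hn).2
          exact Finset.mem_image.mpr ⟨v, Finset.mem_univ v, hv⟩
        have := (Finset.card_le_card hsub).trans Finset.card_image_le
        rw [Finset.card_univ] at this
        exact_mod_cast this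

lemma round_approx {s q : ℝ} {mc : ℕ} (hs : 0 < s) (hq0 : 0 ≤ q) (hq1 : q ≤ 1)
    (hms : 1 ≤ (mc : ℝ) * s) :
    (round (q / s)).toNat ≤ mc ∧ |q - ((round (q / s)).toNat : ℝ) * s| ≤ s / 2 := by
  have habs := abs_le.mp (abs_sub_round (q / s))
  have hq0s : 0 ≤ q / s := div_nonneg hq0 hs.le
  have hr0 : (0 : ℤ) ≤ round (q / s) := by
    have h1 : (-1 : ℝ) < (round (q / s) : ℝ) := by linarith
    have h2 : (-1 : ℤ) < round (q / s) := by exact_mod_cast h1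
    omega
  have hqm : q / s ≤ (mc : ℝ) := by
    rw [div_le_iff₀ hs]
    calc q ≤ 1 := hq1
      _ ≤ (mc : ℝ) * s := hms
  have hle : round (q / s) ≤ (mc : ℤ) := by
    have h1 : (round (q / s) : ℝ) < (mc : ℝ) + 1 := by linarith
    have h2 : (round (q / s) : ℤ) < (mc : ℤ) + 1 := by exact_mod_cast h1
    omega
  constructor
  · omega
  · have hcast : (((round (q / s)).toNat : ℕ) : ℝ) = ((round (q / s) : ℤ) : ℝ) := by
      exact_mod_cast congrArg (fun z : ℤ => (z : ℝ)) (Int.toNat_of_nonneg hr0)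
    rw [hcast]
    have heq : q - ((round (q / s) : ℤ) : ℝ) * s = s * (q / s - ((round (q / s) : ℤ) : ℝ)) := by
      field_simp
    rw [heq, abs_mul, abs_of_pos hs]
    calc s * |q / s - ((round (q / s) : ℤ) : ℝ)| ≤ s * (1 / 2) := by
          apply mul_le_mul_of_nonneg_left _ hs.le
          exact abs_sub_round (q / s)
      _ = s / 2 := by ring

lemma numeric_pow {d : ℕ} (hd : 1 ≤ d) {x : ℝ} (hx0 : 0 ≤ x)
    (hx : x ≤ 1 / (2 * (d : ℝ) ^ 2)) : (1 + x) ^ (d - 1) ≤ (d : ℝ) := by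
  rcases Nat.eq_or_lt_of_le hd with rfl | hd2
  · simp
  · have hd2' : 2 ≤ d := hd2
    have hD : (2 : ℝ) ≤ (d : ℝ) := by exact_mod_cast hd2'
    have h1 : (1 + x) ^ (d - 1) ≤ Real.exp x ^ (d - 1) := by
      apply pow_le_pow_left₀ (by linarith)
      linarith [Real.add_one_le_exp x]
    have h2 : Real.exp x ^ (d - 1) = Real.exp (((d : ℝ) - 1) * x) := by
      rw [← Real.exp_nat_mul]
      congr 1
      have : ((d - 1 : ℕ) : ℝ) = (d : ℝ) - 1 := by
        push_cast [Nat.cast_sub hd]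
        ring
      rw [this]
    have h3 : ((d : ℝ) - 1) * x ≤ 1 / 4 := by
      have hxd : ((d : ℝ) - 1) * x ≤ ((d : ℝ) - 1) / (2 * (d : ℝ) ^ 2) := by
        apply (mul_le_mul_of_nonneg_left hx (by linarith)).trans
        rw [mul_one_div]
      refine hxd.trans ?_
      rw [div_le_iff₀ (by positivity)]
      nlinarith [sq_nonneg ((d : ℝ) - 1)]
    have h4 : Real.exp (((d : ℝ) - 1) * x) ≤ Real.exp (1 / 4) := Real.exp_le_exp.mpr h3
    have h5 : Real.exp (1 / 4) < 2 := by
      rw [show (2 : ℝ) = Real.exp (Real.log 2) from (Real.exp_log two_pos).symm]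
      apply Real.exp_lt_exp.mpr
      linarith [Real.log_two_gt_d9]
    calc (1 + x) ^ (d - 1) ≤ Real.exp (((d:ℝ) - 1) * x) := h2 ▸ h1
      _ ≤ Real.exp (1/4) := h4
      _ ≤ 2 := h5.le
      _ ≤ (d : ℝ) := hD

lemma l1Dist_triangle {α : Type*} [Fintype α] (a c y : α → ℝ) :
    l1Dist a c ≤ l1Dist a y + l1Dist y c := by
  rw [l1Dist, l1Dist, l1Dist, ← Finset.sum_add_distrib]
  exact Finset.sum_le_sum fun x _ => abs_sub_le _ _ _

lemma l1Dist_comm {α : Type*} [Fintype α] (a c : α → ℝ) : l1Dist a c = l1Dist c a := by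
  rw [l1Dist, l1Dist]
  exact Finset.sum_congr rfl fun x _ => abs_sub_comm _ _

lemma internal_of_external {α : Type*} [Fintype α] (A : Set (α → ℝ)) (C' : Finset (α → ℝ))
    (ε : ℝ) (h : ∀ a ∈ A, ∃ c ∈ C', l1Dist a c ≤ ε / 2) :
    ∃ C : Finset (α → ℝ), ↑C ⊆ A ∧ C.card ≤ C'.card ∧
      ∀ a ∈ A, ∃ c ∈ C, l1Dist a c ≤ ε := by
  classical
  set P : (α → ℝ) → Prop := fun c => ∃ a ∈ A, l1Dist a c ≤ ε / 2 with hPdef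
  set pick : (α → ℝ) → (α → ℝ) := fun c => if h : P c then h.choose else c with hpickdef
  refine ⟨Finset.image pick (C'.filter P), ?_, ?_, ?_⟩
  · intro y hy
    simp only [Finset.coe_image, Set.mem_image, Finset.mem_coe, Finset.mem_filter] at hy
    obtain ⟨c, ⟨_, hPc⟩, rfl⟩ := hy
    have : pick c = hPc.choose := dif_pos hPc
    rw [this]
    exact hPc.choose_spec.1
  · exact (Finset.card_image_le).trans (Finset.card_filter_le _ _)
  · intro a ha
    obtain ⟨c, hcC, hac⟩ := h a ha
    have hPc : P c := ⟨a, ha, hac⟩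
    refine ⟨pick c, Finset.mem_image_of_mem _ (Finset.mem_filter.mpr ⟨hcC, hPc⟩), ?_⟩
    have hpc : pick c = hPc.choose := dif_pos hPc
    obtain ⟨haA, hd⟩ := hPc.choose_spec
    calc l1Dist a (pick c) ≤ l1Dist a c + l1Dist c (pick c) := l1Dist_triangle _ _ _
      _ = l1Dist a c + l1Dist (pick c) c := by rw [l1Dist_comm c (pick c)]
      _ ≤ ε / 2 + ε / 2 := by
          apply add_le_add hac
          rw [hpc]
          exact hd
      _ = ε := by ring

lemma coverNum_le {α : Type*} (A : Set α) (dist : α → α → ℝ) (ε : ℝ) (C : Finset α)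
    (h1 : ↑C ⊆ A) (h2 : ∀ a ∈ A, ∃ c ∈ C, dist a c ≤ ε) :
    coverNum A dist ε ≤ (C.card : ℕ∞) :=
  sInf_le ⟨C, h1, rfl, h2⟩

lemma log_nat_mono {a c : ℕ} (h : a ≤ c) (hc : 1 ≤ c) :
    Real.log a ≤ Real.log c := by
  rcases Nat.eq_zero_or_pos a with rfl | ha
  · simp only [Nat.cast_zero, Real.log_zero]
    exact Real.log_nonneg (by exact_mod_cast hc)
  · exact Real.log_le_log (by exact_mod_cast ha) (by exact_mod_cast h)

end L1

section MainAux
variable {V : Type*} [Fintype V] [DecidableEq V]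

lemma ord_lt_rd {G : SimpleGraph V} {D : ℕ → Set V} {r d : ℕ}
    (hD : IsDisintegration G D r) (e : V ≃ Fin d) (v : V) : ordOf D e v < r * d := by
  have h1 : (e v : ℕ) < d := (e v).2
  have h2 : stepOf D v < r := stepOf_lt_r hD (fun _ => trivial) v
  calc ordOf D e v < d + stepOf D v * d := by rw [ordOf]; omega
    _ = (stepOf D v + 1) * d := by ring
    _ ≤ r * d := Nat.mul_le_mul_right d h2

lemma rhs_nonneg (b d r : ℕ) (hb : 1 ≤ b) {ε : ℝ} (hε0 : 0 < ε) (hε1 : ε < 1) :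
    0 ≤ (d : ℝ) * (b : ℝ) ^ r * Real.log (2 * (d : ℝ) ^ (r + 1) * b / ε) := by
  rcases Nat.eq_zero_or_pos d with rfl | hd
  · simp
  · have hdR : (1:ℝ) ≤ (d:ℝ) := by exact_mod_cast hd
    have hbR : (1:ℝ) ≤ (b:ℝ) := by exact_mod_cast hb
    apply mul_nonneg (by positivity)
    apply Real.log_nonneg
    rw [le_div_iff₀ hε0]
    have h1 : (1:ℝ) ≤ (d:ℝ) ^ (r+1) := one_le_pow₀ hdR
    nlinarith

lemma toNat_le_log {nn : ℕ∞} {c : ℕ} (h : nn ≤ (c : ℕ∞)) (R : ℝ)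
    (hR : Real.log (c : ℝ) ≤ R) (hc : 1 ≤ c) : Real.log (nn.toNat : ℝ) ≤ R := by
  have h2 : nn.toNat ≤ c := by
    have := ENat.toNat_le_toNat h (ENat.coe_ne_top c)
    simpa using this
  exact (log_nat_mono h2 hc).trans hR

lemma degenerate_cover (G : SimpleGraph V) (b : ℕ) [Unique (V → Fin b)] {ε : ℝ}
    (hε0 : 0 < ε) : coverNum (probTensors b G) l1Dist ε ≤ (1 : ℕ∞) := by
  classical
  have hext : ∀ a ∈ probTensors b G, ∃ c ∈ ({fun _ => (1:ℝ)} : Finset ((V → Fin b) → ℝ)),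
      l1Dist a c ≤ ε / 2 := by
    rintro a ⟨h0, h1, _⟩
    refine ⟨_, Finset.mem_singleton_self _, ?_⟩
    have hdef : a default = 1 := by rw [← h1, Fintype.sum_unique]
    have heq : l1Dist a (fun _ => (1:ℝ)) = |a default - 1| := by
      rw [l1Dist, Fintype.sum_unique]
    rw [heq, hdef, sub_self, abs_zero]
    positivity
  obtain ⟨C, hCsub, hCcard, hCcov⟩ := internal_of_external (probTensors b G) _ ε hext
  have hcn : coverNum (probTensors b G) l1Dist ε ≤ (C.card : ℕ∞) :=
    coverNum_le _ _ _ C hCsub hCcov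
  have hC1 : C.card ≤ 1 := hCcard.trans (by simp)
  refine hcn.trans ?_
  exact_mod_cast hC1

end MainAux

theorem stmt19 {V : Type*} [Fintype V] [DecidableEq V] (G : SimpleGraph V)
    (b : ℕ) (hb : 1 ≤ b) (ε : ℝ) (hε0 : 0 < ε) (hε1 : ε < 1)
    (d r : ℕ) (hd : Fintype.card V = d) (hr : resilience G = r) :
    coverNum (probTensors b G) l1Dist ε ≠ ⊤ ∧
    Real.log ((coverNum (probTensors b G) l1Dist ε).toNat : ℝ)
      ≤ (d : ℝ) * (b : ℝ) ^ r * Real.log (2 * (d : ℝ) ^ (r + 1) * b / ε) := by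
  classical
  by_cases hdeg : b = 1 ∨ d = 0
  · -- degenerate case
    have hcn1 : coverNum (probTensors b G) l1Dist ε ≤ (1 : ℕ∞) := by
      rcases hdeg with rfl | hd0
      · exact degenerate_cover G 1 hε0
      · haveI : IsEmpty V := Fintype.card_eq_zero_iff.mp (hd.trans hd0)
        exact degenerate_cover G b hε0
    constructor
    · exact ne_top_of_le_ne_top (ENat.coe_ne_top 1) (by exact_mod_cast hcn1)
    · refine toNat_le_log (by exact_mod_cast hcn1) _ ?_ le_rfl
      simpa using rhs_nonneg b d r hb hε0 hε1
  · -- main case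
    push_neg at hdeg
    have hb2 : 2 ≤ b := by omega
    have hd1 : 1 ≤ d := by omega
    obtain ⟨D, hD⟩ := exists_dis_of_resilience G hr
    have hV : Nonempty V := Fintype.card_pos_iff.mp (by omega)
    have hr1 : 1 ≤ r := by
      by_contra hc
      obtain ⟨v⟩ := hV
      have hv : v ∈ ⋃ i, D i := hD.2.1 ▸ Set.mem_univ v
      obtain ⟨i, hi⟩ := Set.mem_iUnion.mp hv
      rw [hD.1 i (by omega)] at hi
      exact hi
    set e : V ≃ Fin d := Fintype.equivFinOfCardEq hd with hedef
    have hdR : (1:ℝ) ≤ (d:ℝ) := by exact_mod_cast hd1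
    have hbR : (2:ℝ) ≤ (b:ℝ) := by exact_mod_cast hb2
    have hb0 : 0 < b := by omega
    set s : ℝ := ε / ((d:ℝ)^2 * b) with hsdef
    have hs : 0 < s := div_pos hε0 (by positivity)
    set mc : ℕ := ⌈(d:ℝ)^2 * b / ε⌉₊ with hmcdef
    have hms : 1 ≤ (mc : ℝ) * s := by
      have h1 : (d:ℝ)^2 * b / ε ≤ (mc : ℝ) := Nat.le_ceil _
      calc (1:ℝ) = ((d:ℝ)^2 * b / ε) * s := by
            rw [hsdef]; field_simp
        _ ≤ (mc:ℝ) * s := mul_le_mul_of_nonneg_right h1 hs.le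
    set dec : (∀ v : V, (↥(clSet G D v) → Fin b) → Fin (mc+1)) → ((V → Fin b) → ℝ) :=
      fun i x => ∏ v, ((i v (fun u => x u.1) : ℕ) : ℝ) * s with hdecdef
    set Cext : Finset ((V → Fin b) → ℝ) := Finset.image dec Finset.univ with hCextdef
    -- external covering property
    have hext : ∀ T ∈ probTensors b G, ∃ c ∈ Cext, l1Dist T c ≤ ε / 2 := by
      rintro T ⟨hT0, hT1, hM⟩
      set q := condq G D T with hqdef
      set ext : ∀ v : V, (↥(clSet G D v) → Fin b) → V → Fin b := fun v σ' w =>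
        if h : w ∈ clSet G D v then σ' ⟨w, h⟩ else ⟨0, hb0⟩ with hextdef
      set iT : ∀ v : V, (↥(clSet G D v) → Fin b) → Fin (mc+1) := fun v σ' =>
        ⟨min mc ((round (q v (ext v σ') / s)).toNat), by omega⟩ with hiTdef
      refine ⟨dec iT, Finset.mem_image_of_mem dec (Finset.mem_univ iT), ?_⟩
      set Qh : V → (V → Fin b) → ℝ :=
        fun v x => ((iT v (fun u => x u.1) : ℕ) : ℝ) * s with hQhdef
      have hdecQ : ∀ x, dec iT x = ∏ v, Qh v x := fun x => rfl
      have hq01 : ∀ v x, 0 ≤ q v x ∧ q v x ≤ 1 :=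
        fun v x => ⟨cq_nonneg hT0 v x, cq_le_one hT0 v x⟩
      have hround : ∀ (v : V) (x : V → Fin b), (round (q v x / s)).toNat ≤ mc ∧
          |q v x - ((round (q v x / s)).toNat : ℝ) * s| ≤ s/2 :=
        fun v x => round_approx hs (hq01 v x).1 (hq01 v x).2 hms
      have hagree : ∀ (v : V) (x : V → Fin b), q v (ext v (fun u => x u.1)) = q v x := by
        intro v x
        apply cq_congr
        intro u hu
        simp only [hextdef]
        rw [dif_pos hu]
      have hQh : ∀ v x, Qh v x = ((round (q v x / s)).toNat : ℝ) * s := by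
        intro v x
        simp only [hQhdef, hiTdef]
        rw [hagree v x, min_eq_right (hround v x).1]
      have hdiff : ∀ v x, |q v x - Qh v x| ≤ s/2 := fun v x => by
        rw [hQh v x]; exact (hround v x).2
      have hdepQh : ∀ v w x t, ordOf D e v < ordOf D e w →
          Qh v (Function.update x w t) = Qh v x := by
        intro v w x t hvw
        have hw : w ∉ clSet G D v := fun hc =>
          absurd (mem_clSet_ord_le hD e hc) (by omega)
        have hfun : (fun u : ↥(clSet G D v) => Function.update x w t u.1)
            = (fun u : ↥(clSet G D v) => x u.1) :=
          funext fun u => Function.update_of_ne (ne_of_mem_of_not_mem u.2 hw) _ _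
        simp only [hQhdef]
        rw [hfun]
      have hsumQh : ∀ v x, ∑ t, Qh v (Function.update x v t) ≤ 1 + b * (s/2) := by
        intro v x
        have h1 : ∀ t : Fin b, Qh v (Function.update x v t)
            ≤ q v (Function.update x v t) + s/2 := by
          intro t
          have := abs_le.mp (hdiff v (Function.update x v t))
          linarith [this.1]
        calc ∑ t, Qh v (Function.update x v t)
            ≤ ∑ t, (q v (Function.update x v t) + s/2) :=
              Finset.sum_le_sum fun t _ => h1 t
          _ = (∑ t, q v (Function.update x v t)) + b * (s/2) := by
              rw [Finset.sum_add_distrib, Finset.sum_const, Finset.card_univ,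
                Fintype.card_fin, nsmul_eq_mul]
          _ ≤ 1 + b * (s/2) := by
              have := cq_sum_le_one hD hT0 v x
              linarith
      have hl1 := l1_prod (ordOf D e) (ordOf_inj e) (fun _ => ⟨0, hb0⟩) (r*d)
        (ord_lt_rd hD e) q Qh (s/2) (1 + b * (s/2)) (by positivity)
        (le_add_of_nonneg_right (by positivity))
        (fun v x => cq_nonneg hT0 v x)
        (fun v x => by simp only [hQhdef]; positivity)
        (fun v w x t h => cq_update hD e h x t) hdepQh
        (fun v x => cq_sum_le_one hD hT0 v x)
        hsumQh hdiff
      have hTx : ∀ x, T x = ∏ v, q v x := fun x => prod_cq hD e hT0 hT1 hM x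
      have hl1' : l1Dist T (dec iT) = ∑ x : V → Fin b, |∏ v, q v x - ∏ v, Qh v x| := by
        rw [l1Dist]
        refine Finset.sum_congr rfl fun x _ => ?_
        rw [hTx x, hdecQ x]
      rw [hl1']
      refine le_trans hl1 ?_
      rw [hd]
      have hbs : (b:ℝ) * (s/2) = ε / (2*(d:ℝ)^2) := by
        rw [hsdef]; field_simp
      rw [hbs]
      have hpow : (1 + ε/(2*(d:ℝ)^2)) ^ (d-1) ≤ (d:ℝ) := by
        apply numeric_pow hd1 (by positivity)
        gcongr
      calc (d:ℝ) * ((ε/(2*(d:ℝ)^2)) * (1+ε/(2*(d:ℝ)^2))^(d-1))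
          ≤ (d:ℝ) * ((ε/(2*(d:ℝ)^2)) * (d:ℝ)) := by
            apply mul_le_mul_of_nonneg_left _ (by positivity)
            apply mul_le_mul_of_nonneg_left hpow (by positivity)
        _ = ε/2 := by field_simp
    obtain ⟨C, hCsub, hCcard, hCcov⟩ := internal_of_external (probTensors b G) Cext ε hext
    -- cardinality bound
    have hclr : ∀ v : V, (clSet G D v).card ≤ r := by
      intro v
      calc (clSet G D v).card ≤ (ancSet G D v).card + 1 := Finset.card_insert_le _ _
        _ ≤ stepOf D v + 1 := by have := anc_card hD v; omega
        _ ≤ r := by have := stepOf_lt_r hD (fun _ => trivial) v; omega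
    have hcardI : Fintype.card (∀ v : V, (↥(clSet G D v) → Fin b) → Fin (mc+1))
        ≤ (mc+1)^(b^r * d) := by
      rw [Fintype.card_pi]
      have h1 : ∀ v : V, Fintype.card ((↥(clSet G D v) → Fin b) → Fin (mc+1))
          ≤ (mc+1)^(b^r) := by
        intro v
        rw [Fintype.card_fun, Fintype.card_fun, Fintype.card_fin, Fintype.card_fin,
          Fintype.card_coe]
        exact Nat.pow_le_pow_right (by omega) (Nat.pow_le_pow_right (by omega) (hclr v))
      calc ∏ v : V, Fintype.card ((↥(clSet G D v) → Fin b) → Fin (mc+1))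
          ≤ ∏ _v : V, (mc+1)^(b^r) := Finset.prod_le_prod' fun v _ => h1 v
        _ = ((mc+1)^(b^r))^d := by rw [Finset.prod_const, Finset.card_univ, hd]
        _ = (mc+1)^(b^r * d) := by rw [pow_mul]
    have hcardC : C.card ≤ (mc+1)^(b^r * d) := by
      refine hCcard.trans (le_trans ?_ hcardI)
      rw [hCextdef]
      refine Finset.card_image_le.trans ?_
      rw [Finset.card_univ]
    have hcn : coverNum (probTensors b G) l1Dist ε ≤ ((C.card : ℕ) : ℕ∞) :=
      coverNum_le _ _ _ C hCsub hCcov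
    have hcn2 : coverNum (probTensors b G) l1Dist ε ≤ (((mc+1)^(b^r * d) : ℕ) : ℕ∞) := by
      refine hcn.trans ?_
      exact_mod_cast hcardC
    constructor
    · exact ne_top_of_le_ne_top (ENat.coe_ne_top _) hcn2
    · refine toNat_le_log hcn2 _ ?_ (Nat.one_le_pow _ _ (by omega))
      have hcast : (((mc+1)^(b^r * d) : ℕ) : ℝ) = ((mc:ℝ)+1)^(b^r * d) := by
        push_cast
        ring
      rw [hcast, Real.log_pow]
      have hm1 : ((mc:ℝ)+1) ≤ 2*(d:ℝ)^(r+1)*b/ε := by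
        have h1 : (mc : ℝ) < (d:ℝ)^2 * b / ε + 1 := Nat.ceil_lt_add_one (by positivity)
        have h2 : (2:ℝ) ≤ (d:ℝ)^2 * b / ε := by
          rw [le_div_iff₀ hε0]
          nlinarith
        have h3 : (d:ℝ)^2 ≤ (d:ℝ)^(r+1) := pow_le_pow_right₀ hdR (by omega)
        have h4 : 2*(d:ℝ)^2*b/ε ≤ 2*(d:ℝ)^(r+1)*b/ε := by gcongr
        calc (mc:ℝ)+1 ≤ (d:ℝ)^2 * b / ε + 2 := by linarith
          _ ≤ 2*((d:ℝ)^2 * b / ε) := by linarith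
          _ = 2*(d:ℝ)^2*b/ε := by ring
          _ ≤ 2*(d:ℝ)^(r+1)*b/ε := h4
      have hlog : Real.log ((mc:ℝ)+1) ≤ Real.log (2*(d:ℝ)^(r+1)*b/ε) :=
        Real.log_le_log (by positivity) hm1
      have hcoef : ((b^r * d : ℕ) : ℝ) = (d:ℝ) * (b:ℝ)^r := by
        push_cast
        ring
      rw [hcoef, mul_assoc, mul_assoc]
      apply mul_le_mul_of_nonneg_left _ (by positivity : (0:ℝ) ≤ (d:ℝ))
      apply mul_le_mul_of_nonneg_left hlog (by positivity)
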